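/- In the setting of the M4 hard-margin algorithm: let w^{(k)} be the optimal (minimum-norm) solution for a finite training set T_k, let x_{k+1} with label y be a point with y⟨w^{(k)}, x_{k+1}⟩ = 1 − δ_k where δ_k > 0 and ‖x_{k+1}‖ ≤ L, and let w^{(k+1)} be the minimum-norm solution for T_{k+1} = T_k ∪ {(x_{k+1}, y)}. Then ‖w^{(k+1)}‖² ≥ ‖w^{(k)}‖² + δ_k²/L². -/

import Mathlib

open scoped RealInnerProductSpace

/-- M4 per-iteration norm increase: if `wk` is the minimum-norm solution for the finite
training set `T_k`, a new point `xn` with label `yn` has margin `1 - δk` (`δk > 0`,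
`‖xn‖ ≤ L`), and `wk1` is the minimum-norm solution for `T_k ∪ {(xn, yn)}`, then
`‖wk1‖² ≥ ‖wk‖² + δk²/L²`. -/
theorem m4_norm_increase {N : ℕ} {ι : Type*} [Fintype ι]
    (x : ι → EuclideanSpace ℝ (Fin N)) (y : ι → ℝ)
    (hy : ∀ i, y i = 1 ∨ y i = -1)
    (xn : EuclideanSpace ℝ (Fin N)) (yn : ℝ) (hyn : yn = 1 ∨ yn = -1)
    (L δk : ℝ) (hL : 0 < L) (hδk : 0 < δk) (hxn : ‖xn‖ ≤ L)
    (wk wk1 : EuclideanSpace ℝ (Fin N))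
    (hwk_feas : ∀ i, 1 ≤ y i * ⟪wk, x i⟫)
    (hwk_min : ∀ v : EuclideanSpace ℝ (Fin N), (∀ i, 1 ≤ y i * ⟪v, x i⟫) → ‖wk‖ ≤ ‖v‖)
    (hmargin : yn * ⟪wk, xn⟫ = 1 - δk)
    (hwk1_feas : (∀ i, 1 ≤ y i * ⟪wk1, x i⟫) ∧ 1 ≤ yn * ⟪wk1, xn⟫)
    (hwk1_min : ∀ v : EuclideanSpace ℝ (Fin N),
      (∀ i, 1 ≤ y i * ⟪v, x i⟫) → 1 ≤ yn * ⟪v, xn⟫ → ‖wk1‖ ≤ ‖v‖) :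
    ‖wk‖ ^ 2 + δk ^ 2 / L ^ 2 ≤ ‖wk1‖ ^ 2 := by
  set Δ := wk1 - wk with hΔ
  -- Step 1: ⟪Δ, wk⟫ ≥ 0 by minimality of wk on the convex feasible set for T_k
  have hkey : (0:ℝ) ≤ ⟪Δ, wk⟫ := by
    by_contra h
    push_neg at h
    have hΔne : Δ ≠ 0 := by
      intro h0
      rw [h0] at h
      simp at h
    have hΔpos : (0:ℝ) < ‖Δ‖ ^ 2 := pow_pos (norm_pos_iff.mpr hΔne) 2
    set c : ℝ := -⟪Δ, wk⟫ with hc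
    have hcpos : 0 < c := by rw [hc]; linarith
    set t : ℝ := min 1 (c / ‖Δ‖ ^ 2) with ht
    have ht0 : 0 < t := lt_min one_pos (div_pos hcpos hΔpos)
    have ht1 : t ≤ 1 := min_le_left _ _
    have htle : t * ‖Δ‖ ^ 2 ≤ c := by
      have := min_le_right 1 (c / ‖Δ‖ ^ 2)
      calc t * ‖Δ‖ ^ 2 ≤ (c / ‖Δ‖ ^ 2) * ‖Δ‖ ^ 2 := by nlinarith
        _ = c := by field_simp
    -- wk + t • Δ is feasible for T_k
    have hfeas : ∀ i, 1 ≤ y i * ⟪wk + t • Δ, x i⟫ := by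
      intro i
      have h1 := hwk_feas i
      have h2 := hwk1_feas.1 i
      have : ⟪wk + t • Δ, x i⟫ = (1 - t) * ⟪wk, x i⟫ + t * ⟪wk1, x i⟫ := by
        rw [hΔ]
        simp [inner_add_left, inner_sub_left, inner_smul_left]
        ring
      rw [this]
      have : y i * ((1 - t) * ⟪wk, x i⟫ + t * ⟪wk1, x i⟫)
          = (1 - t) * (y i * ⟪wk, x i⟫) + t * (y i * ⟪wk1, x i⟫) := by ring
      rw [this]
      nlinarith
    have hle := hwk_min _ hfeas
    have hsq : ‖wk‖ ^ 2 ≤ ‖wk + t • Δ‖ ^ 2 := by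
      have := pow_le_pow_left₀ (norm_nonneg wk) hle 2
      linarith
    have hexp : ‖wk + t • Δ‖ ^ 2 = ‖wk‖ ^ 2 + 2 * t * ⟪Δ, wk⟫ + t ^ 2 * ‖Δ‖ ^ 2 := by
      rw [← real_inner_self_eq_norm_sq, ← real_inner_self_eq_norm_sq,
        ← real_inner_self_eq_norm_sq]
      simp [inner_add_left, inner_add_right, inner_smul_left, inner_smul_right,
        real_inner_comm wk Δ]
      rw [norm_add_sq_real, norm_smul, inner_smul_right, mul_pow, Real.norm_eq_abs, sq_abs]
      ring
    rw [hexp] at hsq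
    nlinarith
  -- Step 2: ⟪Δ, yn • xn⟫ ≥ δk
  have hyabs : |yn| = 1 := by rcases hyn with h | h <;> simp [h]
  have hstep : δk ≤ yn * ⟪Δ, xn⟫ := by
    have h2 := hwk1_feas.2
    have : yn * ⟪Δ, xn⟫ = yn * ⟪wk1, xn⟫ - yn * ⟪wk, xn⟫ := by
      rw [hΔ, inner_sub_left]; ring
    rw [this, hmargin]
    linarith
  -- Step 3: Cauchy–Schwarz: δk ≤ ‖Δ‖ * L
  have hcs : δk ≤ ‖Δ‖ * L := by
    have h1 : yn * ⟪Δ, xn⟫ ≤ |yn * ⟪Δ, xn⟫| := le_abs_self _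
    have h2 : |yn * ⟪Δ, xn⟫| = |⟪Δ, xn⟫| := by rw [abs_mul, hyabs, one_mul]
    have h3 : |⟪Δ, xn⟫| ≤ ‖Δ‖ * ‖xn‖ := abs_real_inner_le_norm Δ xn
    have h4 : ‖Δ‖ * ‖xn‖ ≤ ‖Δ‖ * L := by
      apply mul_le_mul_of_nonneg_left hxn (norm_nonneg _)
    linarith
  have hΔsq : δk ^ 2 / L ^ 2 ≤ ‖Δ‖ ^ 2 := by
    rw [div_le_iff₀ (by positivity)]
    nlinarith [norm_nonneg Δ]
  -- Step 4: combine
  have hexp : ‖wk1‖ ^ 2 = ‖wk‖ ^ 2 + 2 * ⟪Δ, wk⟫ + ‖Δ‖ ^ 2 := by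
    have : wk1 = wk + Δ := by rw [hΔ]; abel
    rw [this, ← real_inner_self_eq_norm_sq, ← real_inner_self_eq_norm_sq,
      ← real_inner_self_eq_norm_sq]
    simp [inner_add_left, inner_add_right, real_inner_comm wk Δ]
    rw [norm_add_sq_real]
  rw [hexp]
  linarith
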